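/- For α > 2 and s > 0, ∫₀^∞ (1 - E[e^{-s H ρ r^{-α}}]) r dr = (1/2) s^{2/α} E[ρ^{2/α}] Γ(1 + 2/α) Γ(1 - 2/α), where H is exponential with rate 1 independent of the nonnegative random variable ρ with E[ρ^{2/α}] < ∞. -/

import Mathlib

open MeasureTheory ProbabilityTheory Real

open Set Filter Topology

lemma aux_one_sub_exp_le (y : ℝ) (hy : 0 ≤ y) : 1 - Real.exp (-y) ≤ y := by
  nlinarith [Real.add_one_le_exp (-y)]

lemma aux_one_sub_exp_nonneg (y : ℝ) (hy : 0 ≤ y) : 0 ≤ 1 - Real.exp (-y) := by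
  simp only [sub_nonneg, Real.exp_le_one_iff]; linarith

lemma aux_one_sub_exp_le_one (y : ℝ) (hy : 0 ≤ y) : 1 - Real.exp (-y) ≤ 1 := by
  have := Real.exp_pos (-y); linarith

lemma integrableM {p : ℝ} (hp : 0 < p) (hp1 : p < 1) :
    IntegrableOn (fun y => (1 - Real.exp (-y)) * y ^ (-p - 1)) (Ioi (0:ℝ)) := by
  have hmeas : Measurable fun y : ℝ => (1 - Real.exp (-y)) * y ^ (-p - 1) := by
    fun_prop
  rw [show Ioi (0:ℝ) = Ioc 0 1 ∪ Ioi 1 by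
    rw [Ioc_union_Ioi_eq_Ioi]; norm_num]
  apply IntegrableOn.union
  · -- dominate by y ^ (-p)
    have hdom : IntegrableOn (fun y : ℝ => y ^ (-p)) (Ioc (0:ℝ) 1) := by
      have := (intervalIntegral.intervalIntegrable_rpow' (a := 0) (b := 1)
        (r := -p) (by linarith)).1
      simpa [intervalIntegrable_iff_integrableOn_Ioc_of_le] using this
    apply hdom.integrable.mono' hmeas.aestronglyMeasurable
    filter_upwards [ae_restrict_mem measurableSet_Ioc] with y hy
    have hy0 : 0 < y := hy.1
    have h1 : 0 ≤ 1 - Real.exp (-y) := aux_one_sub_exp_nonneg y hy0.le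
    have h2 : (0:ℝ) < y ^ (-p - 1) := rpow_pos_of_pos hy0 _
    rw [Real.norm_eq_abs, abs_of_nonneg (by positivity)]
    calc (1 - Real.exp (-y)) * y ^ (-p - 1) ≤ y * y ^ (-p - 1) :=
          mul_le_mul_of_nonneg_right (aux_one_sub_exp_le y hy0.le) h2.le
      _ = y ^ (-p) := by
          rw [mul_comm, ← Real.rpow_add_one hy0.ne']
          norm_num
  · have hdom : IntegrableOn (fun y : ℝ => y ^ (-p - 1)) (Ioi (1:ℝ)) :=
      integrableOn_Ioi_rpow_of_lt (by linarith) one_pos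
    apply hdom.integrable.mono' hmeas.aestronglyMeasurable
    filter_upwards [ae_restrict_mem measurableSet_Ioi] with y hy
    have hy0 : (0:ℝ) < y := lt_trans one_pos hy
    have h1 : 0 ≤ 1 - Real.exp (-y) := aux_one_sub_exp_nonneg y hy0.le
    have h2 : (0:ℝ) < y ^ (-p - 1) := rpow_pos_of_pos hy0 _
    rw [Real.norm_eq_abs, abs_of_nonneg (by positivity)]
    nlinarith [aux_one_sub_exp_le_one y hy0.le]

lemma valueM {p : ℝ} (hp : 0 < p) (hp1 : p < 1) :
    ∫ y in Ioi (0:ℝ), (1 - Real.exp (-y)) * y ^ (-p - 1)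
      = Real.Gamma (1 - p) / p := by
  set F : ℝ → ℝ := fun y => (1 - Real.exp (-y)) * (-(y ^ (-p)) / p) with hF
  set F' : ℝ → ℝ := fun y =>
    Real.exp (-y) * (-(y ^ (-p)) / p) + (1 - Real.exp (-y)) * y ^ (-p - 1) with hF'
  have hGammaInt : IntegrableOn (fun y : ℝ => Real.exp (-y) * y ^ (-p)) (Ioi (0:ℝ)) := by
    have := Real.GammaIntegral_convergent (s := 1 - p) (by linarith)
    simpa using this
  have hint1 : IntegrableOn (fun y : ℝ => Real.exp (-y) * (-(y ^ (-p)) / p)) (Ioi (0:ℝ)) := by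
    have h := hGammaInt.mul_const (-(1/p))
    apply (integrableOn_congr_fun ?_ measurableSet_Ioi).mp h
    intro y hy; ring
  have hintF' : IntegrableOn F' (Ioi (0:ℝ)) := hint1.add (integrableM hp hp1)
  have hderiv : ∀ y ∈ Ioi (0:ℝ), HasDerivAt F (F' y) y := by
    intro y hy
    have h1 : HasDerivAt (fun y : ℝ => 1 - Real.exp (-y)) (Real.exp (-y)) y := by
      have : HasDerivAt (fun y : ℝ => Real.exp (-y)) (-Real.exp (-y)) y := by
        simpa [Function.comp_def] using (Real.hasDerivAt_exp (-y)).comp y (hasDerivAt_neg y)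
      simpa using this.const_sub 1
    have h2 : HasDerivAt (fun y : ℝ => -(y ^ (-p)) / p) (y ^ (-p - 1)) y := by
      have := Real.hasDerivAt_rpow_const (x := y) (p := -p) (Or.inl (ne_of_gt hy))
      have h3 := ((this.neg).div_const p)
      refine h3.congr_deriv ?_
      field_simp
    exact h1.mul h2
  have hcont : ContinuousWithinAt F (Ici 0) 0 := by
    have hF0 : F 0 = 0 := by simp [hF]
    rw [ContinuousWithinAt, hF0]
    apply squeeze_zero_norm' (a := fun y => y ^ (1 - p) / p)
    · filter_upwards [eventually_mem_nhdsWithin] with y (hy : y ∈ Ici (0:ℝ))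
      rcases eq_or_lt_of_le (mem_Ici.mp hy) with h | h
      · simp [hF, ← h, Real.zero_rpow (by linarith : 1 - p ≠ 0)]
      · have h1 : 0 ≤ 1 - Real.exp (-y) := aux_one_sub_exp_nonneg y h.le
        have h2 : (0:ℝ) < y ^ (-p) := rpow_pos_of_pos h _
        rw [Real.norm_eq_abs, hF]
        rw [abs_of_nonpos (by
          apply mul_nonpos_of_nonneg_of_nonpos h1
          apply div_nonpos_of_nonpos_of_nonneg (by linarith) hp.le)]
        rw [neg_mul_eq_mul_neg]
        have : -((-(y ^ (-p)) / p)) = y ^ (-p) / p := by ring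
        rw [this]
        have hb : (1 - Real.exp (-y)) * (y ^ (-p) / p) ≤ y * (y ^ (-p) / p) := by
          apply mul_le_mul_of_nonneg_right (aux_one_sub_exp_le y h.le) (by positivity)
        calc (1 - Real.exp (-y)) * (y ^ (-p) / p) ≤ y * (y ^ (-p) / p) := hb
          _ = y ^ (1 - p) / p := by
              rw [mul_div_assoc']
              congr 1
              rw [mul_comm, ← Real.rpow_add_one (ne_of_gt h)]
              ring_nf
    · have hc : ContinuousAt (fun y : ℝ => y ^ (1 - p) / p) 0 := by
        apply ContinuousAt.div_const
        exact Real.continuousAt_rpow_const 0 (1 - p) (Or.inr (by linarith))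
      have h0 : (fun y : ℝ => y ^ (1 - p) / p) 0 = 0 := by
        simp [Real.zero_rpow (by linarith : 1 - p ≠ 0)]
      have h2 := hc.tendsto
      simp only [h0] at h2
      exact h2.mono_left nhdsWithin_le_nhds
  have htop : Tendsto F atTop (𝓝 0) := by
    have h1 : Tendsto (fun y : ℝ => 1 - Real.exp (-y)) atTop (𝓝 1) := by
      have : Tendsto (fun y : ℝ => Real.exp (-y)) atTop (𝓝 0) := by
        simpa using Real.tendsto_exp_neg_atTop_nhds_zero
      simpa using (tendsto_const_nhds (x := (1:ℝ))).sub this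
    have h2 : Tendsto (fun y : ℝ => -(y ^ (-p)) / p) atTop (𝓝 0) := by
      have := (tendsto_rpow_neg_atTop hp).neg.div_const p
      simpa using this
    have := h1.mul h2
    simpa using this
  have key := integral_Ioi_of_hasDerivAt_of_tendsto hcont hderiv hintF' htop
  have hF0 : F 0 = 0 := by simp [hF]
  rw [hF0, sub_zero] at key
  -- key : ∫ y in Ioi 0, F' y = 0
  have hsplit : ∫ y in Ioi (0:ℝ), F' y
      = (∫ y in Ioi (0:ℝ), Real.exp (-y) * (-(y ^ (-p)) / p))
        + ∫ y in Ioi (0:ℝ), (1 - Real.exp (-y)) * y ^ (-p - 1) :=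
    integral_add hint1 (integrableM hp hp1)
  have hgamma : ∫ y in Ioi (0:ℝ), Real.exp (-y) * (-(y ^ (-p)) / p)
      = -(Real.Gamma (1 - p) / p) := by
    have hG := (Real.Gamma_eq_integral (s := 1 - p) (by linarith)).symm
    have : ∫ y in Ioi (0:ℝ), Real.exp (-y) * (-(y ^ (-p)) / p)
        = (-(1/p)) * ∫ y in Ioi (0:ℝ), Real.exp (-y) * y ^ (1 - p - 1) := by
      rw [← integral_const_mul]
      apply setIntegral_congr_fun measurableSet_Ioi
      intro y hy
      have : (1:ℝ) - p - 1 = -p := by ring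
      rw [this]; ring
    rw [this, hG]
    ring
  rw [hsplit, hgamma] at key
  linarith

lemma integrableI {α w : ℝ} (hα : 2 < α) (hw : 0 < w) :
    IntegrableOn (fun r => (1 - Real.exp (-(w * r ^ (-α)))) * r) (Ioi (0:ℝ)) := by
  have hmeas : Measurable fun r : ℝ => (1 - Real.exp (-(w * r ^ (-α)))) * r := by
    fun_prop
  rw [show Ioi (0:ℝ) = Ioc 0 1 ∪ Ioi 1 by rw [Ioc_union_Ioi_eq_Ioi]; norm_num]
  apply IntegrableOn.union
  · apply (integrableOn_const (C := (1:ℝ)) measure_Ioc_lt_top.ne).mono'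
      hmeas.aestronglyMeasurable
    filter_upwards [ae_restrict_mem measurableSet_Ioc] with r hr
    have hr0 : 0 < r := hr.1
    have hx : 0 ≤ w * r ^ (-α) := by positivity
    rw [Real.norm_eq_abs, abs_of_nonneg
      (mul_nonneg (aux_one_sub_exp_nonneg _ hx) hr0.le)]
    calc (1 - Real.exp (-(w * r ^ (-α)))) * r ≤ 1 * r :=
          mul_le_mul_of_nonneg_right (aux_one_sub_exp_le_one _ hx) hr0.le
      _ ≤ 1 := by simpa using hr.2
  · have hdom : IntegrableOn (fun r : ℝ => w * r ^ (1 - α)) (Ioi (1:ℝ)) :=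
      (integrableOn_Ioi_rpow_of_lt (by linarith) one_pos).const_mul w
    apply hdom.mono' hmeas.aestronglyMeasurable
    filter_upwards [ae_restrict_mem measurableSet_Ioi] with r hr
    have hr0 : (0:ℝ) < r := lt_trans one_pos hr
    have hx : 0 ≤ w * r ^ (-α) := by positivity
    rw [Real.norm_eq_abs, abs_of_nonneg
      (mul_nonneg (aux_one_sub_exp_nonneg _ hx) hr0.le)]
    calc (1 - Real.exp (-(w * r ^ (-α)))) * r ≤ (w * r ^ (-α)) * r :=
          mul_le_mul_of_nonneg_right (aux_one_sub_exp_le _ hx) hr0.le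
      _ = w * r ^ (1 - α) := by
          rw [mul_assoc]
          congr 1
          rw [← Real.rpow_add_one hr0.ne']
          ring_nf
    
lemma valueI {α w : ℝ} (hα : 2 < α) (hw : 0 < w) :
    ∫ r in Ioi (0:ℝ), (1 - Real.exp (-(w * r ^ (-α)))) * r
      = w ^ (2/α) * (Real.Gamma (1 - 2/α) / 2) := by
  have hα0 : (0:ℝ) < α := by linarith
  set q : ℝ := 2/α with hq
  have hq0 : 0 < q := by positivity
  have hq1 : q < 1 := by rw [hq, div_lt_one hα0]; linarith
  -- Step 2 first: scaling identity
  have step2 : ∫ y in Ioi (0:ℝ), (1 - Real.exp (-(w * y))) * y ^ (-q - 1)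
      = w ^ q * (Real.Gamma (1 - q) / q) := by
    have hsub := integral_comp_mul_left_Ioi
      (fun u => (1 - Real.exp (-u)) * u ^ (-q - 1)) 0 hw
    rw [mul_zero] at hsub
    -- hsub : ∫ x in Ioi 0, (1 - exp (-(w*x))) * (w*x) ^ (-q-1) = w⁻¹ • ∫ ...
    have hLHS : ∫ x in Ioi (0:ℝ), (1 - Real.exp (-(w * x))) * (w * x) ^ (-q - 1)
        = w ^ (-q - 1) * ∫ x in Ioi (0:ℝ), (1 - Real.exp (-(w * x))) * x ^ (-q - 1) := by
      rw [← integral_const_mul]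
      apply setIntegral_congr_fun measurableSet_Ioi
      intro x hx
      dsimp only
      have hx0 : (0:ℝ) < x := hx
      rw [Real.mul_rpow hw.le hx0.le]
      ring
    rw [hLHS, valueM hq0 hq1, smul_eq_mul] at hsub
    have hpos : (0:ℝ) < w ^ (-q - 1) := rpow_pos_of_pos hw _
    have hsplit : w ^ (-q - 1) = (w ^ q)⁻¹ * w⁻¹ := by
      rw [show -q - 1 = -q + (-1) from by ring, Real.rpow_add hw,
        Real.rpow_neg_one, Real.rpow_neg hw.le]
    have hwq : (0:ℝ) < w ^ q := rpow_pos_of_pos hw _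
    rw [hsplit] at hsub
    field_simp at hsub ⊢
    linear_combination hsub
  -- Step 1: power substitution r ↦ r ^ (-α)
  have hsub1 := integral_comp_rpow_Ioi
    (fun y => (1/α) * ((1 - Real.exp (-(w * y))) * y ^ (-q - 1))) (p := -α)
    (by linarith : -α ≠ 0)
  have hLHS1 : ∫ x in Ioi (0:ℝ),
      (|(-α)| * x ^ (-α - 1)) • ((1/α) * ((1 - Real.exp (-(w * x ^ (-α)))) * (x ^ (-α)) ^ (-q - 1)))
      = ∫ r in Ioi (0:ℝ), (1 - Real.exp (-(w * r ^ (-α)))) * r := by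
    apply setIntegral_congr_fun measurableSet_Ioi
    intro x hx
    have hx0 : (0:ℝ) < x := hx
    have habs : |(-α)| = α := by rw [abs_neg, abs_of_pos hα0]
    have hpow : (x ^ (-α)) ^ (-q - 1) = x ^ (2 + α) := by
      rw [← Real.rpow_mul hx0.le]
      congr 1
      rw [hq]
      field_simp
      ring
    dsimp only
    rw [smul_eq_mul, habs, hpow]
    have : x ^ (-α - 1) * x ^ (2 + α) = x := by
      rw [← Real.rpow_add hx0, show -α - 1 + (2 + α) = 1 from by ring, Real.rpow_one]
    field_simp
    linear_combination (1 - Real.exp (-(w * x ^ (-α)))) * this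
  rw [hLHS1] at hsub1
  rw [hsub1, integral_const_mul, step2, hq]
  field_simp

lemma expMoment {Ω : Type*} [MeasurableSpace Ω] (μ : Measure Ω) [IsProbabilityMeasure μ]
    (H : Ω → ℝ) (hHmeas : Measurable H)
    (hHexp : ∀ t : ℝ, 0 ≤ t → μ {ω | t ≤ H ω} = ENNReal.ofReal (Real.exp (-t)))
    {p : ℝ} (hp : 0 < p) :
    Integrable (fun ω => H ω ^ p) μ ∧ ∫ ω, H ω ^ p ∂μ = Real.Gamma (1 + p) := by
  have hH0 : ∀ᵐ ω ∂μ, 0 ≤ H ω := by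
    have h1 : μ {ω | 0 ≤ H ω} = 1 := by simpa using hHexp 0 le_rfl
    have hms : MeasurableSet {ω | 0 ≤ H ω} := hHmeas measurableSet_Ici
    rw [ae_iff]
    rw [show {ω | ¬ 0 ≤ H ω} = {ω | 0 ≤ H ω}ᶜ by ext ω; simp]
    exact (prob_compl_eq_zero_iff hms).mpr h1
  have g_int : ∀ t > (0:ℝ), IntervalIntegrable (fun t => p * t ^ (p - 1)) volume 0 t := by
    intro t ht
    exact (intervalIntegral.intervalIntegrable_rpow' (by linarith)).const_mul p
  have g_nn : ∀ᵐ t ∂(volume.restrict (Ioi (0:ℝ))), 0 ≤ p * t ^ (p - 1) := by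
    filter_upwards [ae_restrict_mem measurableSet_Ioi] with t ht
    have : (0:ℝ) < t := ht
    positivity
  have layer := lintegral_comp_eq_lintegral_meas_le_mul μ hH0 hHmeas.aemeasurable g_int g_nn
  -- LHS of layer
  have hLHS : ∫⁻ ω, ENNReal.ofReal (∫ t in (0:ℝ)..H ω, p * t ^ (p - 1)) ∂μ
      = ∫⁻ ω, ENNReal.ofReal (H ω ^ p) ∂μ := by
    apply lintegral_congr_ae
    filter_upwards [hH0] with ω hω
    congr 1
    rw [intervalIntegral.integral_const_mul,
      integral_rpow (Or.inl (by linarith : (-1:ℝ) < p - 1))]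
    rw [Real.zero_rpow (by linarith : p - 1 + 1 ≠ 0)]
    rw [sub_zero, show p - 1 + 1 = p by ring]
    field_simp
  -- RHS of layer
  have hInt : IntegrableOn (fun t : ℝ => Real.exp (-t) * (p * t ^ (p - 1))) (Ioi (0:ℝ)) := by
    have h := (Real.GammaIntegral_convergent hp).const_mul p
    apply (integrableOn_congr_fun ?_ measurableSet_Ioi).mp h
    intro t ht; ring
  have hRHS : ∫⁻ t in Ioi (0:ℝ), μ {a | t ≤ H a} * ENNReal.ofReal (p * t ^ (p - 1))
      = ENNReal.ofReal (Real.Gamma (1 + p)) := by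
    rw [setLIntegral_congr_fun measurableSet_Ioi
      (fun t (ht : t ∈ Ioi (0:ℝ)) => by
        rw [hHexp t (le_of_lt ht), ← ENNReal.ofReal_mul (Real.exp_nonneg _)])]
    rw [← ofReal_integral_eq_lintegral_ofReal hInt]
    · congr 1
      have : ∫ t in Ioi (0:ℝ), Real.exp (-t) * (p * t ^ (p - 1))
          = p * ∫ t in Ioi (0:ℝ), Real.exp (-t) * t ^ (p - 1) := by
        rw [← integral_const_mul]
        apply setIntegral_congr_fun measurableSet_Ioi
        intro t ht; ring
      rw [this, ← Real.Gamma_eq_integral hp, add_comm, Real.Gamma_add_one hp.ne']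
    · filter_upwards [ae_restrict_mem measurableSet_Ioi] with t ht
      have : (0:ℝ) < t := ht
      positivity
  rw [hLHS, hRHS] at layer
  have hmp : Measurable fun ω => H ω ^ p := hHmeas.pow_const p
  have hfin : HasFiniteIntegral (fun ω => H ω ^ p) μ := by
    rw [hasFiniteIntegral_iff_ofReal (by
      filter_upwards [hH0] with ω hω using Real.rpow_nonneg hω p)]
    rw [layer]
    exact ENNReal.ofReal_lt_top
  have hint : Integrable (fun ω => H ω ^ p) μ := ⟨hmp.aestronglyMeasurable, hfin⟩
  refine ⟨hint, ?_⟩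
  rw [integral_eq_lintegral_of_nonneg_ae
    (by filter_upwards [hH0] with ω hω using Real.rpow_nonneg hω p)
    hmp.aestronglyMeasurable, layer,
    ENNReal.toReal_ofReal (Real.Gamma_nonneg_of_nonneg (by linarith))]

/-- For `α > 2` and `s > 0`, with `H` exponential of rate 1 independent of a
nonnegative random variable `ρ` satisfying `E[ρ^(2/α)] < ∞`,
`∫₀^∞ (1 - E[e^(-s H ρ r^(-α))]) r dr
  = (1/2) s^(2/α) E[ρ^(2/α)] Γ(1 + 2/α) Γ(1 - 2/α)`. -/
theorem interference_radial_integral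
    {Ω : Type*} [MeasurableSpace Ω] (μ : Measure Ω) [IsProbabilityMeasure μ]
    (H ρ : Ω → ℝ)
    (hHmeas : Measurable H) (hρmeas : Measurable ρ)
    (hρnonneg : ∀ ω, 0 ≤ ρ ω)
    (hHexp : ∀ t : ℝ, 0 ≤ t → μ {ω | t ≤ H ω} = ENNReal.ofReal (Real.exp (-t)))
    (hindep : IndepFun H ρ μ)
    (α s : ℝ) (hα : 2 < α) (hs : 0 < s)
    (hmom : Integrable (fun ω => ρ ω ^ (2 / α)) μ) :
    ∫ r in Set.Ioi (0:ℝ),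
        (1 - ∫ ω, Real.exp (-(s * H ω * ρ ω * r ^ (-α))) ∂μ) * r
      = (1 / 2) * s ^ (2 / α) * (∫ ω, ρ ω ^ (2 / α) ∂μ)
          * Real.Gamma (1 + 2 / α) * Real.Gamma (1 - 2 / α) := by
  have hα0 : (0:ℝ) < α := by linarith
  set q : ℝ := 2 / α with hq
  have hq0 : 0 < q := by positivity
  have hq1 : q < 1 := by rw [hq, div_lt_one hα0]; linarith
  -- a.e. nonnegativity of H
  have hH0 : ∀ᵐ ω ∂μ, 0 ≤ H ω := by
    have h1 : μ {ω | 0 ≤ H ω} = 1 := by simpa using hHexp 0 le_rfl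
    have hms : MeasurableSet {ω | 0 ≤ H ω} := hHmeas measurableSet_Ici
    rw [ae_iff, show {ω | ¬ 0 ≤ H ω} = {ω | 0 ≤ H ω}ᶜ by ext ω; simp]
    exact (prob_compl_eq_zero_iff hms).mpr h1
  obtain ⟨hHint, hHval⟩ := expMoment μ H hHmeas hHexp hq0
  -- independence of the powers
  have indep' : IndepFun (fun ω => H ω ^ q) (fun ω => ρ ω ^ q) μ := by
    exact hindep.comp (measurable_id.pow_const q) (measurable_id.pow_const q)
  have hmul_int : Integrable (fun ω => H ω ^ q * ρ ω ^ q) μ :=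
    indep'.integrable_mul hHint hmom
  have hmul_val : ∫ ω, H ω ^ q * ρ ω ^ q ∂μ
      = (∫ ω, H ω ^ q ∂μ) * ∫ ω, ρ ω ^ q ∂μ :=
    indep'.integral_mul_eq_mul_integral hHint.aestronglyMeasurable hmom.aestronglyMeasurable
  -- the joint integrand
  have hjoint : Measurable fun x : ℝ × Ω =>
      1 - Real.exp (-(s * H x.2 * ρ x.2 * x.1 ^ (-α))) := by fun_prop
  -- Step A: rewrite the inner expression
  have stepA : ∫ r in Ioi (0:ℝ),
      (1 - ∫ ω, Real.exp (-(s * H ω * ρ ω * r ^ (-α))) ∂μ) * r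
      = ∫ r in Ioi (0:ℝ),
        (∫ ω, (1 - Real.exp (-(s * H ω * ρ ω * r ^ (-α)))) ∂μ) * r := by
    apply setIntegral_congr_fun measurableSet_Ioi
    intro r hr
    have hr0 : (0:ℝ) < r := hr
    have hexp_int : Integrable (fun ω => Real.exp (-(s * H ω * ρ ω * r ^ (-α)))) μ := by
      apply (integrable_const (1:ℝ)).mono'
        ((by fun_prop : Measurable fun ω => Real.exp (-(s * H ω * ρ ω * r ^ (-α)))).aestronglyMeasurable)
      filter_upwards [hH0] with ω hω
      rw [Real.norm_eq_abs, abs_of_nonneg (Real.exp_nonneg _)]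
      apply Real.exp_le_one_iff.mpr
      have : 0 ≤ s * H ω * ρ ω * r ^ (-α) :=
        mul_nonneg (mul_nonneg (mul_nonneg hs.le hω) (hρnonneg ω)) (Real.rpow_nonneg hr0.le _)
      linarith
    dsimp only
    rw [integral_sub (integrable_const 1) hexp_int, integral_const]
    simp
  rw [stepA]
  -- nonnegativity and integrability facts per ω
  have hnn_inner : ∀ r : ℝ, 0 < r → (0 : Ω → ℝ) ≤ᵐ[μ]
      fun ω => 1 - Real.exp (-(s * H ω * ρ ω * r ^ (-α))) := by
    intro r hr0
    filter_upwards [hH0] with ω hω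
    exact aux_one_sub_exp_nonneg _
      (mul_nonneg (mul_nonneg (mul_nonneg hs.le hω) (hρnonneg ω)) (Real.rpow_nonneg hr0.le _))
  have hinner_int : ∀ r : ℝ, 0 < r →
      Integrable (fun ω => 1 - Real.exp (-(s * H ω * ρ ω * r ^ (-α)))) μ := by
    intro r hr0
    apply (integrable_const (1:ℝ)).mono'
      ((by fun_prop : Measurable fun ω => 1 - Real.exp (-(s * H ω * ρ ω * r ^ (-α)))).aestronglyMeasurable)
    filter_upwards [hH0] with ω hω
    rw [Real.norm_eq_abs, abs_of_nonneg (aux_one_sub_exp_nonneg _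
      (mul_nonneg (mul_nonneg (mul_nonneg hs.le hω) (hρnonneg ω)) (Real.rpow_nonneg hr0.le _)))]
    have := Real.exp_pos (-(s * H ω * ρ ω * r ^ (-α)))
    linarith
  -- measurability of the r-integrand
  have hΦmeas : AEStronglyMeasurable
      (fun r : ℝ => (∫ ω, (1 - Real.exp (-(s * H ω * ρ ω * r ^ (-α)))) ∂μ) * r)
      (volume.restrict (Ioi 0)) := by
    apply AEStronglyMeasurable.mul ?_ aestronglyMeasurable_id
    exact (hjoint.stronglyMeasurable.integral_prod_right').aestronglyMeasurable
  -- pass to lintegral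
  rw [integral_eq_lintegral_of_nonneg_ae ?_ hΦmeas]
  rotate_left
  · filter_upwards [ae_restrict_mem measurableSet_Ioi] with r hr
    have hr0 : (0:ℝ) < r := hr
    exact mul_nonneg (integral_nonneg_of_ae (hnn_inner r hr0)) hr0.le
  -- transform inside lintegral
  have stepF : ∫⁻ r in Ioi (0:ℝ), ENNReal.ofReal
        ((∫ ω, (1 - Real.exp (-(s * H ω * ρ ω * r ^ (-α)))) ∂μ) * r)
      = ∫⁻ r in Ioi (0:ℝ), ∫⁻ ω,
          ENNReal.ofReal ((1 - Real.exp (-(s * H ω * ρ ω * r ^ (-α)))) * r) ∂μ := by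
    apply setLIntegral_congr_fun measurableSet_Ioi
    intro r hr
    have hr0 : (0:ℝ) < r := hr
    dsimp only
    rw [ENNReal.ofReal_mul' hr0.le,
      ofReal_integral_eq_lintegral_ofReal (hinner_int r hr0) (hnn_inner r hr0),
      ← lintegral_mul_const' (ENNReal.ofReal r) _ ENNReal.ofReal_ne_top]
    congr 1
    ext ω
    rw [ENNReal.ofReal_mul' hr0.le]
  rw [stepF]
  -- Fubini swap
  have hswap : ∫⁻ r in Ioi (0:ℝ), ∫⁻ ω,
        ENNReal.ofReal ((1 - Real.exp (-(s * H ω * ρ ω * r ^ (-α)))) * r) ∂μ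
      = ∫⁻ ω, (∫⁻ r in Ioi (0:ℝ),
        ENNReal.ofReal ((1 - Real.exp (-(s * H ω * ρ ω * r ^ (-α)))) * r)) ∂μ := by
    apply lintegral_lintegral_swap
    apply Measurable.aemeasurable
    apply ENNReal.measurable_ofReal.comp
    exact hjoint.mul measurable_fst
  rw [hswap]
  set c : ℝ := Real.Gamma (1 - q) / 2 * s ^ q with hc
  have hc0 : 0 ≤ c := by
    apply mul_nonneg (div_nonneg (Real.Gamma_nonneg_of_nonneg (by linarith)) (by norm_num))
    exact Real.rpow_nonneg hs.le q
  have stepH : ∫⁻ ω, (∫⁻ r in Ioi (0:ℝ),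
        ENNReal.ofReal ((1 - Real.exp (-(s * H ω * ρ ω * r ^ (-α)))) * r)) ∂μ
      = ∫⁻ ω, ENNReal.ofReal (c * (H ω ^ q * ρ ω ^ q)) ∂μ := by
    apply lintegral_congr_ae
    filter_upwards [hH0] with ω hω
    have hw0 : 0 ≤ s * H ω * ρ ω := mul_nonneg (mul_nonneg hs.le hω) (hρnonneg ω)
    rcases eq_or_lt_of_le hw0 with h | h
    · -- degenerate case
      have hz : s * H ω * ρ ω = 0 := h.symm
      have hHρ : H ω ^ q * ρ ω ^ q = 0 := by
        rcases mul_eq_zero.mp hz with h2 | h2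
        · rcases mul_eq_zero.mp h2 with h3 | h3
          · exact absurd h3 hs.ne'
          · rw [h3, Real.zero_rpow hq0.ne', zero_mul]
        · rw [h2, Real.zero_rpow hq0.ne', mul_zero]
      simp [hz, hHρ]
    · -- nondegenerate case
      have hnnr : (0 : ℝ → ℝ) ≤ᵐ[volume.restrict (Ioi 0)]
          fun r => (1 - Real.exp (-(s * H ω * ρ ω * r ^ (-α)))) * r := by
        filter_upwards [ae_restrict_mem measurableSet_Ioi] with r hr
        have hr0 : (0:ℝ) < r := hr
        exact mul_nonneg (aux_one_sub_exp_nonneg _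
          (mul_nonneg hw0 (Real.rpow_nonneg hr0.le _))) hr0.le
      rw [← ofReal_integral_eq_lintegral_ofReal (integrableI hα h) hnnr]
      congr 1
      rw [valueI hα h]
      rw [Real.mul_rpow (mul_nonneg hs.le hω) (hρnonneg ω), Real.mul_rpow hs.le hω, ← hq]
      ring
  rw [stepH, ← ofReal_integral_eq_lintegral_ofReal (hmul_int.const_mul c) ?_]
  rotate_left
  · filter_upwards [hH0] with ω hω
    exact mul_nonneg hc0 (mul_nonneg (Real.rpow_nonneg hω q) (Real.rpow_nonneg (hρnonneg ω) q))
  have hρnn : 0 ≤ ∫ ω, ρ ω ^ q ∂μ :=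
    integral_nonneg fun ω => Real.rpow_nonneg (hρnonneg ω) q
  rw [integral_const_mul, hmul_val, hHval]
  rw [ENNReal.toReal_ofReal (by
    apply mul_nonneg hc0
    exact mul_nonneg (Real.Gamma_nonneg_of_nonneg (by linarith)) hρnn)]
  rw [hc]
  ring
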